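/- Along the H-Fac ODE trajectory, with G = ∇f(W), dW/dt = -(1/2)[(u1_nᵀ - G1_n1_nᵀ/n)/√(r1_nᵀ) + (1_mvᵀ - 1_m1_mᵀG/m)/√(1_msᵀ)] - G/√(rsᵀ/1_mᵀr), du/dt = G1_n/n - αu, dv/dt = Gᵀ1_m/m - αv, dr/dt = G²1_n - βr, ds/dt = (Gᵀ)²1_m - βs, and assuming 0 < β ≤ 4α and 1_mᵀr = 1_nᵀs ≥ (r_i + s_j)/2 for all i,j, the Hamiltonian H = f(W) + (n/4)Σ_i u_i²/√r_i + (m/4)Σ_j v_j²/√s_j satisfies dH/dt ≤ 0. -/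

import Mathlib

open scoped BigOperators

lemma aux_sqrt_add (a b S : ℝ) (ha : 0 < a) (hb : 0 < b) (hS : (a+b)/2 ≤ S) :
    Real.sqrt a + Real.sqrt b ≤ 2 * Real.sqrt S := by
  have hS0 : 0 < S := by linarith
  have hab : Real.sqrt (a*b) ≤ (a+b)/2 := by
    rw [show (a+b)/2 = Real.sqrt (((a+b)/2)^2) from (Real.sqrt_sq (by positivity)).symm]
    exact Real.sqrt_le_sqrt (by nlinarith [sq_nonneg (a-b)])
  have h1 : Real.sqrt a * Real.sqrt b = Real.sqrt (a*b) := (Real.sqrt_mul ha.le b).symm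
  nlinarith [Real.sq_sqrt ha.le, Real.sq_sqrt hb.le, Real.sq_sqrt hS0.le,
    Real.sqrt_nonneg a, Real.sqrt_nonneg b, Real.sqrt_nonneg S, Real.sqrt_pos.mpr hS0]

lemma aux1 (a b S : ℝ) (ha : 0 < a) (hb : 0 < b) (hS : (a+b)/2 ≤ S) :
    1/(2*Real.sqrt a) + 1/(2*Real.sqrt b) ≤ 1/Real.sqrt (a*b/S) := by
  have hS0 : 0 < S := by linarith
  have hsa := Real.sqrt_pos.mpr ha
  have hsb := Real.sqrt_pos.mpr hb
  have hsS := Real.sqrt_pos.mpr hS0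
  have h1 : Real.sqrt (a*b/S) = Real.sqrt a * Real.sqrt b / Real.sqrt S := by
    rw [Real.sqrt_div (by positivity) S, Real.sqrt_mul ha.le]
  have h2 := aux_sqrt_add a b S ha hb hS
  rw [h1, one_div_div, div_add_div _ _ (by positivity) (by positivity),
    div_le_div_iff₀ (by positivity) (by positivity)]
  nlinarith [mul_pos hsa hsb, mul_pos (mul_pos hsa hsb) hsS]

lemma aux2 (N uu A R α β rr : ℝ) (hrr : 0 < rr) (hN : 0 < N) (hR : 0 ≤ R)
    (hA : A^2 ≤ N*R) (hβα : β ≤ 4*α) :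
    -(1/2) * ((uu - A/N) / Real.sqrt rr) * A + R * -(1/(2*Real.sqrt rr))
      + N/4 * ((2 * uu * (A/N - α*uu) * Real.sqrt rr
        - uu^2 * ((R - β*rr) / (2*Real.sqrt rr))) / Real.sqrt rr ^ 2) ≤ 0 := by
  have hx : 0 < Real.sqrt rr := Real.sqrt_pos.mpr hrr
  have hx2 : Real.sqrt rr ^ 2 = rr := Real.sq_sqrt hrr.le
  set x := Real.sqrt rr with hxdef
  rw [← hx2]
  have key : -(1/2) * ((uu - A/N) / x) * A + R * -(1/(2*x))
      + N/4 * ((2 * uu * (A/N - α*uu) * x - uu^2 * ((R - β*x^2) / (2*x))) / x ^ 2)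
      = (A^2/(2*N) - R/2 + (N*β/8 - N*α/2)*uu^2)/x - (N/8)*uu^2*R/x^3 := by
    field_simp
    ring
  rw [key]
  have hA2 : A^2/(2*N) ≤ R/2 := by
    rw [div_le_div_iff₀ (by positivity) (by norm_num)]
    nlinarith
  have hc : (N*β/8 - N*α/2) * uu^2 ≤ 0 :=
    mul_nonpos_iff.mpr (Or.inr ⟨by nlinarith, sq_nonneg uu⟩)
  have h1 : A^2/(2*N) - R/2 + (N*β/8 - N*α/2)*uu^2 ≤ 0 := by linarith
  have h2 : 0 ≤ (N/8)*uu^2*R/x^3 := by positivity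
  have h3 : (A^2/(2*N) - R/2 + (N*β/8 - N*α/2)*uu^2)/x ≤ 0 :=
    div_nonpos_of_nonpos_of_nonneg h1 hx.le
  linarith

/-- Along the H-Fac ODE trajectory with `0 < β ≤ 4α` and the symmetry condition
`1_mᵀr = 1_nᵀs ≥ (r_i + s_j)/2`, the Hamiltonian
`H = f(W) + (n/4)Σ_i u_i²/√r_i + (m/4)Σ_j v_j²/√s_j` satisfies `dH/dt ≤ 0`. -/
theorem stmt_9 (m n : ℕ) (hm : 0 < m) (hn : 0 < n)
    (f : EuclideanSpace ℝ (Fin m × Fin n) → ℝ)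
    (g : EuclideanSpace ℝ (Fin m × Fin n) → EuclideanSpace ℝ (Fin m × Fin n))
    (hf : ∀ x, HasGradientAt f (g x) x)
    (α β : ℝ) (hα : 0 < α) (hβ : 0 < β) (hβα : β ≤ 4 * α)
    (W : ℝ → EuclideanSpace ℝ (Fin m × Fin n))
    (u : ℝ → Fin m → ℝ) (v : ℝ → Fin n → ℝ)
    (r : ℝ → Fin m → ℝ) (s : ℝ → Fin n → ℝ)
    (hrpos : ∀ t i, 0 < r t i) (hspos : ∀ t j, 0 < s t j)
    (hsym : ∀ t, ∑ i, r t i = ∑ j, s t j)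
    (hSbig : ∀ t i j, (r t i + s t j) / 2 ≤ ∑ i', r t i')
    (hW : ∀ t, HasDerivAt W
      (WithLp.toLp 2 (fun p : Fin m × Fin n =>
        -(1 / 2) * ((u t p.1 - (∑ j, g (W t) (p.1, j)) / n) / Real.sqrt (r t p.1)
          + (v t p.2 - (∑ i, g (W t) (i, p.2)) / m) / Real.sqrt (s t p.2))
        - g (W t) p / Real.sqrt (r t p.1 * s t p.2 / ∑ i', r t i'))) t)
    (hu : ∀ t, HasDerivAt u
      (fun i : Fin m => (∑ j, g (W t) (i, j)) / n - α * u t i) t)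
    (hv : ∀ t, HasDerivAt v
      (fun j : Fin n => (∑ i, g (W t) (i, j)) / m - α * v t j) t)
    (hr : ∀ t, HasDerivAt r
      (fun i : Fin m => (∑ j, (g (W t) (i, j)) ^ 2) - β * r t i) t)
    (hs : ∀ t, HasDerivAt s
      (fun j : Fin n => (∑ i, (g (W t) (i, j)) ^ 2) - β * s t j) t)
    (t : ℝ) :
    ∃ d : ℝ,
      HasDerivAt (fun τ => f (W τ)
        + (n / 4 : ℝ) * ∑ i, (u τ i) ^ 2 / Real.sqrt (r τ i)
        + (m / 4 : ℝ) * ∑ j, (v τ j) ^ 2 / Real.sqrt (s τ j)) d t ∧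
      d ≤ 0 := by
  have h1 : HasDerivAt (fun τ => f (W τ))
      (∑ p : Fin m × Fin n, g (W t) p *
        (-(1 / 2) * ((u t p.1 - (∑ j, g (W t) (p.1, j)) / n) / Real.sqrt (r t p.1)
          + (v t p.2 - (∑ i, g (W t) (i, p.2)) / m) / Real.sqrt (s t p.2))
        - g (W t) p / Real.sqrt (r t p.1 * s t p.2 / ∑ i', r t i'))) t := by
    have h := (hasGradientAt_iff_hasFDerivAt.mp (hf (W t))).comp_hasDerivAt t (hW t)
    simp [InnerProductSpace.toDual_apply_apply, PiLp.inner_apply, RCLike.inner_apply, mul_comm] at h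
    simp only [one_div, neg_mul]
    exact h
  have h2 : HasDerivAt (fun τ => ∑ i, (u τ i)^2 / Real.sqrt (r τ i))
      (∑ i, (2 * u t i * ((∑ j, g (W t) (i, j)) / n - α * u t i) * Real.sqrt (r t i)
        - (u t i)^2 * (((∑ j, (g (W t) (i, j)) ^ 2) - β * r t i) / (2 * Real.sqrt (r t i))))
        / Real.sqrt (r t i) ^ 2) t := by
    refine HasDerivAt.fun_sum fun i _ => ?_
    have h := ((hasDerivAt_pi.1 (hu t) i).pow 2).div
      ((hasDerivAt_pi.1 (hr t) i).sqrt (hrpos t i).ne')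
      (Real.sqrt_ne_zero'.mpr (hrpos t i))
    convert h using 2
    case e'_4 => rfl
    norm_num
    norm_num [Pi.pow_apply]
  have h3 : HasDerivAt (fun τ => ∑ j, (v τ j)^2 / Real.sqrt (s τ j))
      (∑ j, (2 * v t j * ((∑ i, g (W t) (i, j)) / m - α * v t j) * Real.sqrt (s t j)
        - (v t j)^2 * (((∑ i, (g (W t) (i, j)) ^ 2) - β * s t j) / (2 * Real.sqrt (s t j))))
        / Real.sqrt (s t j) ^ 2) t := by
    refine HasDerivAt.fun_sum fun j _ => ?_
    have h := ((hasDerivAt_pi.1 (hv t) j).pow 2).div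
      ((hasDerivAt_pi.1 (hs t) j).sqrt (hspos t j).ne')
      (Real.sqrt_ne_zero'.mpr (hspos t j))
    convert h using 2
    case e'_4 => rfl
    norm_num
    norm_num [Pi.pow_apply]
  have hd := (h1.add (h2.const_mul ((n:ℝ)/4))).add (h3.const_mul ((m:ℝ)/4))
  refine ⟨_, hd, ?_⟩
  -- key pointwise bound
  have key : ∀ (i : Fin m) (j : Fin n), g (W t) (i, j) *
      (-(1 / 2) * ((u t i - (∑ j', g (W t) (i, j')) / n) / Real.sqrt (r t i)
        + (v t j - (∑ i', g (W t) (i', j)) / m) / Real.sqrt (s t j))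
      - g (W t) (i, j) / Real.sqrt (r t i * s t j / ∑ i', r t i'))
      ≤ (-(1/2) * ((u t i - (∑ j', g (W t) (i, j')) / n) / Real.sqrt (r t i)) * g (W t) (i, j)
          + g (W t) (i, j)^2 * -(1/(2*Real.sqrt (r t i))))
        + (-(1/2) * ((v t j - (∑ i', g (W t) (i', j)) / m) / Real.sqrt (s t j)) * g (W t) (i, j)
          + g (W t) (i, j)^2 * -(1/(2*Real.sqrt (s t j)))) := by
    intro i j
    have hL := aux1 (r t i) (s t j) (∑ i', r t i') (hrpos t i) (hspos t j) (hSbig t i j)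
    have hmul := mul_le_mul_of_nonneg_left hL (sq_nonneg (g (W t) (i, j)))
    have hexp : g (W t) (i, j) *
        (-(1 / 2) * ((u t i - (∑ j', g (W t) (i, j')) / n) / Real.sqrt (r t i)
          + (v t j - (∑ i', g (W t) (i', j)) / m) / Real.sqrt (s t j))
        - g (W t) (i, j) / Real.sqrt (r t i * s t j / ∑ i', r t i'))
        = -(1/2) * ((u t i - (∑ j', g (W t) (i, j')) / n) / Real.sqrt (r t i)) * g (W t) (i, j)
          + -(1/2) * ((v t j - (∑ i', g (W t) (i', j)) / m) / Real.sqrt (s t j)) * g (W t) (i, j)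
          - g (W t) (i, j)^2 * (1 / Real.sqrt (r t i * s t j / ∑ i', r t i')) := by
      ring
    rw [hexp]
    linarith [hmul]
  have hXsum : (∑ p : Fin m × Fin n, g (W t) p *
        (-(1 / 2) * ((u t p.1 - (∑ j, g (W t) (p.1, j)) / n) / Real.sqrt (r t p.1)
          + (v t p.2 - (∑ i, g (W t) (i, p.2)) / m) / Real.sqrt (s t p.2))
        - g (W t) p / Real.sqrt (r t p.1 * s t p.2 / ∑ i', r t i')))
      ≤ (∑ i, ∑ j, (-(1/2) * ((u t i - (∑ j', g (W t) (i, j')) / n) / Real.sqrt (r t i)) * g (W t) (i, j)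
          + g (W t) (i, j)^2 * -(1/(2*Real.sqrt (r t i)))))
        + ∑ j, ∑ i, (-(1/2) * ((v t j - (∑ i', g (W t) (i', j)) / m) / Real.sqrt (s t j)) * g (W t) (i, j)
          + g (W t) (i, j)^2 * -(1/(2*Real.sqrt (s t j)))) := by
    rw [Fintype.sum_prod_type]
    refine le_trans (Finset.sum_le_sum fun i _ => Finset.sum_le_sum fun j _ => key i j)
      (le_of_eq ?_)
    simp only [Finset.sum_add_distrib]
    congr 1
    rw [Finset.sum_comm]
    congr 1
    rw [Finset.sum_comm]
  have hFi : ∀ i : Fin m,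
      (∑ j, (-(1/2) * ((u t i - (∑ j', g (W t) (i, j')) / n) / Real.sqrt (r t i)) * g (W t) (i, j)
        + g (W t) (i, j)^2 * -(1/(2*Real.sqrt (r t i)))))
      + (n:ℝ)/4 * ((2 * u t i * ((∑ j, g (W t) (i, j)) / n - α * u t i) * Real.sqrt (r t i)
        - (u t i)^2 * (((∑ j, (g (W t) (i, j)) ^ 2) - β * r t i) / (2 * Real.sqrt (r t i))))
        / Real.sqrt (r t i) ^ 2) ≤ 0 := by
    intro i
    have hA : (∑ j, g (W t) (i, j))^2 ≤ (n:ℝ) * ∑ j, (g (W t) (i, j))^2 := by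
      have h := sq_sum_le_card_mul_sum_sq (s := (Finset.univ : Finset (Fin n)))
        (f := fun j => g (W t) (i, j))
      simpa using h
    have h0 : (∑ j, (-(1/2) * ((u t i - (∑ j', g (W t) (i, j')) / n) / Real.sqrt (r t i)) * g (W t) (i, j)
        + g (W t) (i, j)^2 * -(1/(2*Real.sqrt (r t i)))))
        = -(1/2) * ((u t i - (∑ j', g (W t) (i, j')) / n) / Real.sqrt (r t i)) * (∑ j, g (W t) (i, j))
          + (∑ j, (g (W t) (i, j))^2) * -(1/(2*Real.sqrt (r t i))) := by
      rw [Finset.sum_add_distrib, ← Finset.mul_sum, ← Finset.sum_mul]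
    rw [h0]
    have := aux2 (n:ℝ) (u t i) (∑ j, g (W t) (i, j)) (∑ j, (g (W t) (i, j))^2) α β (r t i)
      (hrpos t i) (by exact_mod_cast hn) (by positivity) hA hβα
    linarith
  have hFj : ∀ j : Fin n,
      (∑ i, (-(1/2) * ((v t j - (∑ i', g (W t) (i', j)) / m) / Real.sqrt (s t j)) * g (W t) (i, j)
        + g (W t) (i, j)^2 * -(1/(2*Real.sqrt (s t j)))))
      + (m:ℝ)/4 * ((2 * v t j * ((∑ i, g (W t) (i, j)) / m - α * v t j) * Real.sqrt (s t j)
        - (v t j)^2 * (((∑ i, (g (W t) (i, j)) ^ 2) - β * s t j) / (2 * Real.sqrt (s t j))))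
        / Real.sqrt (s t j) ^ 2) ≤ 0 := by
    intro j
    have hA : (∑ i, g (W t) (i, j))^2 ≤ (m:ℝ) * ∑ i, (g (W t) (i, j))^2 := by
      have h := sq_sum_le_card_mul_sum_sq (s := (Finset.univ : Finset (Fin m)))
        (f := fun i => g (W t) (i, j))
      simpa using h
    have h0 : (∑ i, (-(1/2) * ((v t j - (∑ i', g (W t) (i', j)) / m) / Real.sqrt (s t j)) * g (W t) (i, j)
        + g (W t) (i, j)^2 * -(1/(2*Real.sqrt (s t j)))))
        = -(1/2) * ((v t j - (∑ i', g (W t) (i', j)) / m) / Real.sqrt (s t j)) * (∑ i, g (W t) (i, j))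
          + (∑ i, (g (W t) (i, j))^2) * -(1/(2*Real.sqrt (s t j))) := by
      rw [Finset.sum_add_distrib, ← Finset.mul_sum, ← Finset.sum_mul]
    rw [h0]
    have := aux2 (m:ℝ) (v t j) (∑ i, g (W t) (i, j)) (∑ i, (g (W t) (i, j))^2) α β (s t j)
      (hspos t j) (by exact_mod_cast hm) (by positivity) hA hβα
    linarith
  have e1 : (n:ℝ)/4 * (∑ i, (2 * u t i * ((∑ j, g (W t) (i, j)) / n - α * u t i) * Real.sqrt (r t i)
        - (u t i)^2 * (((∑ j, (g (W t) (i, j)) ^ 2) - β * r t i) / (2 * Real.sqrt (r t i))))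
        / Real.sqrt (r t i) ^ 2)
      = ∑ i, (n:ℝ)/4 * ((2 * u t i * ((∑ j, g (W t) (i, j)) / n - α * u t i) * Real.sqrt (r t i)
        - (u t i)^2 * (((∑ j, (g (W t) (i, j)) ^ 2) - β * r t i) / (2 * Real.sqrt (r t i))))
        / Real.sqrt (r t i) ^ 2) := Finset.mul_sum _ _ _
  have e2 : (m:ℝ)/4 * (∑ j, (2 * v t j * ((∑ i, g (W t) (i, j)) / m - α * v t j) * Real.sqrt (s t j)
        - (v t j)^2 * (((∑ i, (g (W t) (i, j)) ^ 2) - β * s t j) / (2 * Real.sqrt (s t j))))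
        / Real.sqrt (s t j) ^ 2)
      = ∑ j, (m:ℝ)/4 * ((2 * v t j * ((∑ i, g (W t) (i, j)) / m - α * v t j) * Real.sqrt (s t j)
        - (v t j)^2 * (((∑ i, (g (W t) (i, j)) ^ 2) - β * s t j) / (2 * Real.sqrt (s t j))))
        / Real.sqrt (s t j) ^ 2) := Finset.mul_sum _ _ _
  have t1 : (∑ i, ∑ j, (-(1/2) * ((u t i - (∑ j', g (W t) (i, j')) / n) / Real.sqrt (r t i)) * g (W t) (i, j)
          + g (W t) (i, j)^2 * -(1/(2*Real.sqrt (r t i)))))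
      + (∑ i, (n:ℝ)/4 * ((2 * u t i * ((∑ j, g (W t) (i, j)) / n - α * u t i) * Real.sqrt (r t i)
        - (u t i)^2 * (((∑ j, (g (W t) (i, j)) ^ 2) - β * r t i) / (2 * Real.sqrt (r t i))))
        / Real.sqrt (r t i) ^ 2)) ≤ 0 := by
    rw [← Finset.sum_add_distrib]
    exact Finset.sum_nonpos fun i _ => hFi i
  have t2 : (∑ j, ∑ i, (-(1/2) * ((v t j - (∑ i', g (W t) (i', j)) / m) / Real.sqrt (s t j)) * g (W t) (i, j)
          + g (W t) (i, j)^2 * -(1/(2*Real.sqrt (s t j)))))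
      + (∑ j, (m:ℝ)/4 * ((2 * v t j * ((∑ i, g (W t) (i, j)) / m - α * v t j) * Real.sqrt (s t j)
        - (v t j)^2 * (((∑ i, (g (W t) (i, j)) ^ 2) - β * s t j) / (2 * Real.sqrt (s t j))))
        / Real.sqrt (s t j) ^ 2)) ≤ 0 := by
    rw [← Finset.sum_add_distrib]
    exact Finset.sum_nonpos fun j _ => hFj j
  linarith [hXsum, t1, t2, e1.le, e1.ge, e2.le, e2.ge]
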